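/- Under the assumptions of the cohomology construction (log ĝ Hölder, uniformly contracted stable fibres with section ς of Π), the function b̂(θ) = Σ_{n≥0}(log ĝ(Ŝ^{-n}θ) − log ĝ(Ŝ^{-n}ςΠθ)) satisfies the coboundary identity log ĝ(θ) = log g(Πθ) + b̂(θ) − b̂(Ŝ^{-1}θ), where log g(Πθ) := log ĝ(ςΠθ) + Σ_{n=1}^∞(log ĝ(Ŝ^{-n}ςΠθ) − log ĝ(Ŝ^{-n+1}ςΠŜ^{-1}θ)); in particular the right-hand correction term depends only on Πθ. -/

import Mathlib

open Set Filter

/-- Coboundary identity: with `b̂ θ = ∑_{n≥0} (log ĝ (Ŝ⁻ⁿ θ) − log ĝ (Ŝ⁻ⁿ ς Pr θ))` one has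
`log ĝ θ = log g (Pr θ) + b̂ θ − b̂ (Ŝ⁻¹ θ)` where
`log g (Pr θ) = log ĝ (ς Pr θ) + ∑_{n≥1} (log ĝ (Ŝ⁻ⁿ ς Pr θ) − log ĝ (Ŝ⁻ⁿ⁺¹ ς Pr Ŝ⁻¹ θ))`,
and the latter term depends only on `Pr θ`. -/
theorem stmt7 {Θ : Type*} [MetricSpace Θ] [CompactSpace Θ]
    {T : Type*} (S : Θ ≃ Θ) (Pr : Θ → T) (ς : T → Θ) (Sfac : T → T)
    (hsec : ∀ t, Pr (ς t) = t)
    (hconj : ∀ θ, Pr (S.symm θ) = Sfac (Pr θ))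
    (logg : Θ → ℝ)
    (L αexp : ℝ) (hL : 0 ≤ L) (hα : 0 < αexp)
    (hHolder : ∀ x y : Θ, |logg x - logg y| ≤ L * dist x y ^ αexp)
    (C r : ℝ) (hC : 0 < C) (hr : r ∈ Ioo (0 : ℝ) 1)
    (hcontract : ∀ θ : Θ, ∀ n : ℕ, 0 < n →
      dist (S.symm^[n] θ) (S.symm^[n] (ς (Pr θ))) ≤ C * r ^ n)
    -- `b̂` is the (absolutely convergent) Sinai–Bowen series
    (b : Θ → ℝ)
    (hb : ∀ θ, b θ = ∑' n : ℕ, (logg (S.symm^[n] θ) - logg (S.symm^[n] (ς (Pr θ)))))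
    -- the correction term `log g ∘ Pr`
    (logG : Θ → ℝ)
    (hlogG : ∀ θ, logG θ = logg (ς (Pr θ)) +
      ∑' n : ℕ, (logg (S.symm^[n + 1] (ς (Pr θ))) - logg (S.symm^[n] (ς (Pr (S.symm θ)))))) :
    (∀ θ : Θ,
        Summable (fun n : ℕ => logg (S.symm^[n] θ) - logg (S.symm^[n] (ς (Pr θ)))) ∧
        Summable (fun n : ℕ =>
          logg (S.symm^[n + 1] (ς (Pr θ))) - logg (S.symm^[n] (ς (Pr (S.symm θ)))))) ∧
    (∀ θ : Θ, logg θ = logG θ + b θ - b (S.symm θ)) ∧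
    (∀ θ θ' : Θ, Pr θ = Pr θ' → logG θ = logG θ') := by

  have hrα : r ^ αexp < 1 := Real.rpow_lt_one hr.1.le hr.2 hα
  have hrα0 : 0 ≤ r ^ αexp := Real.rpow_nonneg hr.1.le _
  have aux : ∀ θ : Θ, Summable
      (fun n : ℕ => logg (S.symm^[n] θ) - logg (S.symm^[n] (ς (Pr θ)))) := by
    intro θ
    rw [← summable_nat_add_iff 1]
    apply Summable.of_norm_bounded (g := fun n => (L * C ^ αexp * r ^ αexp) * (r ^ αexp) ^ n)
      ((summable_geometric_of_lt_one hrα0 hrα).mul_left _)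
    intro n
    have hd := hcontract θ (n + 1) (Nat.succ_pos n)
    have h1 : ‖logg (S.symm^[n + 1] θ) - logg (S.symm^[n + 1] (ς (Pr θ)))‖
        ≤ L * dist (S.symm^[n + 1] θ) (S.symm^[n + 1] (ς (Pr θ))) ^ αexp := hHolder _ _
    have h2 : dist (S.symm^[n + 1] θ) (S.symm^[n + 1] (ς (Pr θ))) ^ αexp
        ≤ (C * r ^ (n + 1)) ^ αexp := Real.rpow_le_rpow dist_nonneg hd hα.le
    have h4 : (r ^ (n + 1)) ^ αexp = (r ^ αexp) ^ (n + 1) := by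
      rw [← Real.rpow_natCast r (n + 1), ← Real.rpow_mul hr.1.le, mul_comm,
        Real.rpow_mul hr.1.le, Real.rpow_natCast]
    have h3 : (C * r ^ (n + 1)) ^ αexp = C ^ αexp * (r ^ αexp) ^ (n + 1) := by
      rw [Real.mul_rpow hC.le (pow_nonneg hr.1.le _), h4]
    calc ‖logg (S.symm^[n + 1] θ) - logg (S.symm^[n + 1] (ς (Pr θ)))‖
        ≤ L * (C * r ^ (n + 1)) ^ αexp := le_trans h1 (by
          exact mul_le_mul_of_nonneg_left h2 hL)
      _ = (L * C ^ αexp * r ^ αexp) * (r ^ αexp) ^ n := by rw [h3]; ring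
  have hkey : ∀ θ : Θ, ς (Pr (S.symm θ)) = ς (Pr (S.symm (ς (Pr θ)))) := by
    intro θ; rw [hconj, hconj, hsec]
  have hg : ∀ θ : Θ, Summable (fun n : ℕ =>
      logg (S.symm^[n + 1] (ς (Pr θ))) - logg (S.symm^[n] (ς (Pr (S.symm θ))))) := by
    intro θ
    have h := aux (S.symm (ς (Pr θ)))
    simp only [← Function.iterate_succ_apply] at h
    rw [hkey θ]
    exact h
  refine ⟨fun θ => ⟨aux θ, hg θ⟩, fun θ => ?_, fun θ θ' h => by
    rw [hlogG θ, hlogG θ', h, hconj, hconj, h]⟩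
  have hfsucc : Summable (fun n : ℕ =>
      logg (S.symm^[n + 1] θ) - logg (S.symm^[n + 1] (ς (Pr θ)))) :=
    (summable_nat_add_iff 1).mpr (aux θ)
  have hk := hg θ
  have hbθ : b θ = (logg θ - logg (ς (Pr θ))) +
      ∑' n : ℕ, (logg (S.symm^[n + 1] θ) - logg (S.symm^[n + 1] (ς (Pr θ)))) := by
    rw [hb, Summable.tsum_eq_zero_add (aux θ)]
    simp
  have hbS : b (S.symm θ) =
      (∑' n : ℕ, (logg (S.symm^[n + 1] θ) - logg (S.symm^[n + 1] (ς (Pr θ)))))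
      + ∑' n : ℕ, (logg (S.symm^[n + 1] (ς (Pr θ))) - logg (S.symm^[n] (ς (Pr (S.symm θ))))) := by
    rw [hb, ← Summable.tsum_add hfsucc hk]
    congr 1
    funext n
    simp only [Function.iterate_succ_apply]
    ring
  rw [hlogG θ, hbθ, hbS]
  ring
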